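/- Let n be a positive even integer, θ = π/(2(n+1)), and let k be an odd integer with 3 ≤ k ≤ 2n−1. Then ∑_{j=0}^{n/2−1} cos((1+2j)·θ) · cos(k(1+2j)·θ) = 0. -/

import Mathlib

open Real Finset

lemma sin_mul_sum_cos (x : ℝ) : ∀ N : ℕ,
    Real.sin x * ∑ j ∈ Finset.range N, Real.cos ((2 * j + 1) * x)
      = Real.sin (2 * N * x) / 2 := by
  intro N
  induction N with
  | zero => simp
  | succ N ih =>
    rw [Finset.sum_range_succ, mul_add, ih]
    have h := Real.sin_sub_sin (2 * ((N : ℝ) + 1) * x) (2 * (N : ℝ) * x)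
    have h1 : (2 * ((N : ℝ) + 1) * x - 2 * (N : ℝ) * x) / 2 = x := by ring
    have h2 : (2 * ((N : ℝ) + 1) * x + 2 * (N : ℝ) * x) / 2 = (2 * (N : ℝ) + 1) * x := by
      ring
    rw [h1, h2] at h
    push_cast
    linarith

lemma T_val (n a : ℕ) (hne : Even n) (ha1 : 1 ≤ a) (han : a ≤ n) :
    ∑ j ∈ Finset.range (n / 2), Real.cos ((2 * j + 1) * ((a : ℝ) * Real.pi / (n + 1)))
      = - Real.cos (a * Real.pi) / 2 := by
  set x := (a : ℝ) * Real.pi / (n + 1) with hx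
  have hn1 : (0:ℝ) < (n : ℝ) + 1 := by positivity
  have hs := sin_mul_sum_cos x (n / 2)
  have h2 : ((n / 2 : ℕ) : ℝ) * 2 = n := by
    obtain ⟨m, hm⟩ := hne
    subst hm
    have : (m + m) / 2 = m := by omega
    rw [this]; push_cast; ring
  have harg : 2 * ((n / 2 : ℕ) : ℝ) * x = a * Real.pi - x := by
    rw [hx]; field_simp; linear_combination h2
  rw [harg] at hs
  have hsin : Real.sin ((a : ℝ) * Real.pi - x) = - Real.cos (a * Real.pi) * Real.sin x := by
    rw [Real.sin_sub, Real.sin_nat_mul_pi]; ring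
  rw [hsin] at hs
  have hxpos : 0 < x := by
    apply div_pos
    · have h0 : (0:ℝ) < (a:ℝ) := by exact_mod_cast ha1
      positivity
    · positivity
  have hxlt : x < Real.pi := by
    rw [hx, div_lt_iff₀ hn1]
    have : (a : ℝ) < (n : ℝ) + 1 := by exact_mod_cast Nat.lt_succ_of_le han
    nlinarith [Real.pi_pos]
  have hsx : Real.sin x ≠ 0 :=
    ne_of_gt (Real.sin_pos_of_pos_of_lt_pi hxpos hxlt)
  have hfin : Real.sin x * ∑ j ∈ Finset.range (n / 2),
      Real.cos ((2 * j + 1) * ((a : ℝ) * Real.pi / (n + 1)))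
      = Real.sin x * (- Real.cos (a * Real.pi) / 2) := by
    rw [← hx] at *
    rw [hs]; ring
  exact mul_left_cancel₀ hsx hfin
theorem cos_product_sum_zero (n : ℕ) (hn : 0 < n) (hne : Even n)
    (k : ℤ) (hk : Odd k) (hk3 : 3 ≤ k) (hk' : k ≤ 2 * n - 1) :
    ∑ j ∈ Finset.range (n / 2),
        Real.cos (((1 + 2 * j : ℕ) : ℝ) * (Real.pi / (2 * (n + 1))))
          * Real.cos ((k : ℝ) * ((1 + 2 * j : ℕ) : ℝ) * (Real.pi / (2 * (n + 1)))) = 0 := by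
  obtain ⟨m, hm⟩ := hk
  have hm1 : 1 ≤ m := by omega
  have hmn : m + 1 ≤ (n : ℤ) := by omega
  set l : ℕ := m.toNat with hl
  have hml : (m : ℤ) = (l : ℤ) := by omega
  have hkR : (k : ℝ) = 2 * (l : ℝ) + 1 := by
    have : (k : ℝ) = 2 * (m : ℝ) + 1 := by exact_mod_cast hm
    rw [this]; norm_cast; omega
  have hl1 : 1 ≤ l := by omega
  have hln : l + 1 ≤ n := by omega
  have hn1 : ((n : ℝ) + 1) ≠ 0 := by positivity
  have key : ∀ j ∈ Finset.range (n / 2),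
      Real.cos (((1 + 2 * j : ℕ) : ℝ) * (Real.pi / (2 * (n + 1))))
        * Real.cos ((k : ℝ) * ((1 + 2 * j : ℕ) : ℝ) * (Real.pi / (2 * (n + 1))))
      = (Real.cos ((2 * j + 1) * (((l + 1 : ℕ) : ℝ) * Real.pi / (n + 1)))
          + Real.cos ((2 * j + 1) * ((l : ℝ) * Real.pi / (n + 1)))) / 2 := by
    intro j _
    have hcc := Real.cos_add_cos ((2 * (j : ℝ) + 1) * (((l + 1 : ℕ) : ℝ) * Real.pi / (n + 1)))
      ((2 * (j : ℝ) + 1) * ((l : ℝ) * Real.pi / (n + 1)))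
    have e1 : ((2 * (j : ℝ) + 1) * (((l + 1 : ℕ) : ℝ) * Real.pi / (n + 1))
        + (2 * (j : ℝ) + 1) * ((l : ℝ) * Real.pi / (n + 1))) / 2
        = (k : ℝ) * ((1 + 2 * j : ℕ) : ℝ) * (Real.pi / (2 * (n + 1))) := by
      rw [hkR]; push_cast; field_simp; ring
    have e2 : ((2 * (j : ℝ) + 1) * (((l + 1 : ℕ) : ℝ) * Real.pi / (n + 1))
        - (2 * (j : ℝ) + 1) * ((l : ℝ) * Real.pi / (n + 1))) / 2
        = ((1 + 2 * j : ℕ) : ℝ) * (Real.pi / (2 * (n + 1))) := by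
      push_cast; field_simp; ring
    rw [e1, e2] at hcc
    linarith
  rw [Finset.sum_congr rfl key]
  have hsplit : ∑ j ∈ Finset.range (n / 2),
      (Real.cos ((2 * j + 1) * (((l + 1 : ℕ) : ℝ) * Real.pi / (n + 1)))
        + Real.cos ((2 * j + 1) * ((l : ℝ) * Real.pi / (n + 1)))) / 2
      = ((∑ j ∈ Finset.range (n / 2),
            Real.cos ((2 * j + 1) * (((l + 1 : ℕ) : ℝ) * Real.pi / (n + 1))))
        + ∑ j ∈ Finset.range (n / 2),
            Real.cos ((2 * j + 1) * ((l : ℝ) * Real.pi / (n + 1)))) / 2 := by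
    rw [← Finset.sum_add_distrib, Finset.sum_div]
  rw [hsplit, T_val n (l + 1) hne (by omega) hln,
    show ((l : ℝ) * Real.pi / (n + 1)) = ((l : ℕ) : ℝ) * Real.pi / (n + 1) by norm_cast,
    T_val n l hne hl1 (by omega)]
  have : (((l + 1 : ℕ) : ℝ)) * Real.pi = (l : ℝ) * Real.pi + Real.pi := by push_cast; ring
  rw [this, Real.cos_add_pi]
  ring
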